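/- Let Z : ℕ → ℤ satisfy Z(0) = 0 and Z(k) ≥ 0 for all k ≥ 0, and define Y : ℕ → ℤ by Y(k) = Z(k) − #{j ∈ {0, 1, …, k} : Z(j) = 0}. Then for every k ≥ 0 one has min{Y(j) : 0 ≤ j ≤ k} = −#{j ∈ {0, 1, …, k} : Z(j) = 0}, and consequently Z(k) = Y(k) − min{Y(j) : 0 ≤ j ≤ k} for every k ≥ 0. -/

import Mathlib

/-- If `Z : ℕ → ℤ` satisfies `Z 0 = 0` and `Z k ≥ 0`, and
`Y k = Z k − #{j ≤ k : Z j = 0}`, then for every `k`,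
`min {Y j : j ≤ k} = −#{j ≤ k : Z j = 0}` and hence `Z k = Y k − min {Y j : j ≤ k}`. -/
theorem stmt6 (Z : ℕ → ℤ) (hZ0 : Z 0 = 0) (hZnn : ∀ k, 0 ≤ Z k)
    (Y : ℕ → ℤ)
    (hY : ∀ k, Y k = Z k - (((Finset.range (k + 1)).filter fun j => Z j = 0).card : ℤ)) :
    ∀ k : ℕ,
      ((Finset.range (k + 1)).image Y).min' (Finset.nonempty_range_add_one.image Y)
        = -((((Finset.range (k + 1)).filter fun j => Z j = 0).card : ℤ))
      ∧ Z k = Y k - ((Finset.range (k + 1)).image Y).min' (Finset.nonempty_range_add_one.image Y) := by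
  intro k
  set N : ℕ → ℕ := fun m => ((Finset.range (m + 1)).filter fun j => Z j = 0).card with hN
  have hNmono : ∀ {a b : ℕ}, a ≤ b → N a ≤ N b := by
    intro a b hab
    exact Finset.card_le_card (Finset.filter_subset_filter _
      (Finset.range_subset_range.mpr (by omega)))
  -- the set of zero indices up to k is nonempty
  have h0mem : 0 ∈ (Finset.range (k + 1)).filter fun j => Z j = 0 := by
    simp [hZ0]
  set S := (Finset.range (k + 1)).filter fun j => Z j = 0 with hS
  have hSne : S.Nonempty := ⟨0, h0mem⟩
  set j0 := S.max' hSne with hj0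
  have hj0mem : j0 ∈ S := S.max'_mem hSne
  have hj0k : j0 < k + 1 := (Finset.mem_filter.mp hj0mem).1 |> Finset.mem_range.mp
  have hZj0 : Z j0 = 0 := by
    have := (Finset.mem_filter.mp hj0mem).2
    simpa using this
  have hNj0 : N j0 = N k := by
    apply le_antisymm (hNmono (by omega))
    apply Finset.card_le_card
    intro x hx
    have hx' := Finset.mem_filter.mp hx
    have hxle : x ≤ j0 := S.le_max' x (by simpa [hS] using hx)
    exact Finset.mem_filter.mpr ⟨Finset.mem_range.mpr (by omega), hx'.2⟩
  have hmin : ((Finset.range (k + 1)).image Y).min' (Finset.nonempty_range_add_one.image Y)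
      = -(N k : ℤ) := by
    apply le_antisymm
    · apply Finset.min'_le
      refine Finset.mem_image.mpr ⟨j0, Finset.mem_range.mpr hj0k, ?_⟩
      rw [hY j0, hZj0, show ((Finset.range (j0 + 1)).filter fun j => Z j = 0).card = N k from hNj0]
      ring
    · apply Finset.le_min'
      intro y hy
      obtain ⟨j, hj, rfl⟩ := Finset.mem_image.mp hy
      have hjk : j ≤ k := by have := Finset.mem_range.mp hj; omega
      have h1 : (N j : ℤ) ≤ N k := by exact_mod_cast hNmono hjk
      have h2 := hZnn j
      rw [hY j, show ((Finset.range (j + 1)).filter fun x => Z x = 0).card = N j from rfl]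
      omega
  exact ⟨hmin, by
    rw [hmin, hY k, show ((Finset.range (k + 1)).filter fun x => Z x = 0).card = N k from rfl]
    ring⟩
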